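/- Under the full setup, if moreover f_1 ≥ ℓ − 3, then ℓ < 13; that is, the assumptions ℓ ≥ 13 and f_1 ≥ ℓ − 3 together lead to a contradiction. -/

import Mathlib

open Finset

noncomputable def Phi (d : ℕ) (x : ℤ) : ℤ := (Polynomial.cyclotomic d ℤ).eval x

def gs (n y : ℕ) : ℕ := ∑ i ∈ Finset.range n, y ^ i




lemma Phi_eq_gs {p : ℕ} (hp : p.Prime) (k b : ℕ) :
    Phi (p ^ (k + 1)) (b : ℤ) = ((gs p (b ^ p ^ k) : ℕ) : ℤ) := by
  unfold Phi gs
  rw [Polynomial.cyclotomic_prime_pow_eq_geom_sum hp]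
  rw [Polynomial.eval_finset_sum]
  push_cast
  simp [pow_mul]

lemma Phi_dvd_gs {d n : ℕ} (hdn : d ∣ n) (hd : d ≠ 1) (b : ℕ) :
    Phi d (b : ℤ) ∣ ((gs n b : ℕ) : ℤ) := by
  have h := Polynomial.cyclotomic_dvd_geom_sum_of_dvd ℤ hdn hd
  have h2 := Polynomial.eval_dvd (p := Polynomial.cyclotomic d ℤ) (x := (b:ℤ)) h
  unfold Phi gs
  rw [Polynomial.eval_finset_sum] at h2
  push_cast
  simpa using h2

lemma sq_le_two_pow {n : ℕ} (h : 5 ≤ n) : n ^ 2 ≤ 2 ^ n := by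
  induction n, h using Nat.le_induction with
  | base => norm_num
  | succ n hn ih =>
    have h1 : 2 * n + 1 ≤ n ^ 2 := by nlinarith
    have : (n + 1) ^ 2 = n ^ 2 + (2 * n + 1) := by ring
    calc (n+1)^2 = n^2 + (2*n+1) := this
    _ ≤ 2^n + n^2 := by omega
    _ ≤ 2^n + 2^n := by omega
    _ = 2^(n+1) := by ring



lemma gs_succ (n y : ℕ) : gs (n+1) y = gs n y + y ^ n := by
  unfold gs; rw [Finset.sum_range_succ]

lemma pow_eq_one_add (y : ℕ) (hy : 1 ≤ y) : ∀ j, y ^ j = 1 + (y - 1) * gs j y := by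
  intro j
  induction j with
  | zero => simp [gs]
  | succ j ih =>
    have h : y = 1 + (y - 1) := by omega
    rw [gs_succ, pow_succ]
    calc y ^ j * y = y ^ j * (1 + (y-1)) := by rw [← h]
    _ = 1 + (y-1) * gs j y + ((1 + (y-1) * gs j y)) * (y - 1) := by rw [ih]; ring
    _ = 1 + (y - 1) * (gs j y + y ^ j) := by rw [ih]; ring

lemma gs_eq (n y : ℕ) (hy : 1 ≤ y) :
    gs n y = n + (y - 1) * ∑ j ∈ Finset.range n, gs j y := by
  unfold gs
  rw [Finset.mul_sum]
  have : ∀ j ∈ Finset.range n, y ^ j = 1 + (y-1) * gs j y := fun j _ => pow_eq_one_add y hy j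
  rw [Finset.sum_congr rfl this, Finset.sum_add_distrib]
  simp only [Finset.sum_const, Finset.card_range, smul_eq_mul, mul_one, gs]

lemma gs_lower {n y : ℕ} (hy : 2 ≤ y) (hn : 2 ≤ n) : y ^ (n - 1) < gs n y := by
  obtain ⟨m, rfl⟩ : ∃ m, n = m + 1 := ⟨n - 1, by omega⟩
  rw [gs_succ]
  simp only [Nat.add_sub_cancel]
  have h1 : 1 ≤ gs m y := by
    have : (0:ℕ) ∈ Finset.range m := by simp; omega
    have := Finset.single_le_sum (f := fun i => y ^ i) (fun i _ => Nat.zero_le _) this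
    simpa [gs] using this.trans_eq' (by simp)
  omega

lemma gs_upper {n y : ℕ} (hy : 2 ≤ y) (hn : 1 ≤ n) : gs n y < 2 * y ^ (n - 1) := by
  induction n, hn using Nat.le_induction with
  | base => norm_num [gs]
  | succ n hn ih =>
    rw [gs_succ]
    simp only [Nat.add_sub_cancel]
    have h2 : 2 * y ^ (n-1) ≤ y ^ n := by
      calc 2 * y ^ (n-1) ≤ y * y ^ (n-1) := Nat.mul_le_mul_right _ hy
      _ = y ^ (n - 1 + 1) := by ring
      _ = y ^ n := by congr 1; omega
    have hyn : 1 ≤ y ^ n := Nat.one_le_pow _ _ (by omega)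
    omega



lemma T_facts {p y : ℕ} (hp : p.Prime) (hop : Odd p) (h2 : p ^ 2 ∣ y - 1) (hy : 1 ≤ y) :
    p ∣ (∑ j ∈ Finset.range p, gs j y) ∧ ¬ p ^ 2 ∣ (∑ j ∈ Finset.range p, gs j y) := by
  obtain ⟨k, hk⟩ : ∃ k, p = 2 * k + 1 := hop
  obtain ⟨t, ht⟩ := h2
  have hy1 : y = 1 + p ^ 2 * t := by omega
  set T := ∑ j ∈ Finset.range p, gs j y with hT
  haveI : NeZero (p ^ 2) := ⟨pow_ne_zero _ hp.ne_zero⟩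
  have hgauss : (∑ j ∈ Finset.range p, j) = p * k := by
    have h1 := Finset.sum_range_id_mul_two p
    have h2 : p * (p - 1) = 2 * (p * k) := by
      have hpk : p - 1 = 2 * k := by omega
      rw [hpk, hk]; ring
    omega
  have hcast : (T : ZMod (p ^ 2)) = ((p * k : ℕ) : ZMod (p ^ 2)) := by
    have hy2 : ((y : ℕ) : ZMod (p ^ 2)) = 1 := by
      have hz : ((p:ZMod (p^2)))^2 = 0 := by
        rw [← Nat.cast_pow, ZMod.natCast_self]
      rw [hy1]; push_cast; rw [hz]; ring
    have hTc : (T : ZMod (p ^ 2)) = ∑ j ∈ Finset.range p, ∑ i ∈ Finset.range j, ((y:ZMod (p^2)))^i := by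
      push_cast [hT, gs]; rfl
    rw [hTc]
    simp only [hy2, one_pow, Finset.sum_const, Finset.card_range, nsmul_eq_mul, mul_one]
    rw [← Nat.cast_sum, hgauss]
  have hmod : T ≡ p * k [MOD p ^ 2] := (ZMod.natCast_eq_natCast_iff _ _ _).mp hcast
  constructor
  · have h1 : T % p = (p * k) % p := hmod.of_dvd ⟨p, by ring⟩
    have h2 : (p * k) % p = 0 := Nat.mul_mod_right p k
    exact Nat.dvd_of_mod_eq_zero (by omega)
  · intro hdvd
    have hpp : (p^2 : ℕ) ∣ p * k :=
      (Nat.modEq_zero_iff_dvd).mp ((Nat.ModEq.symm hmod).trans ((Nat.modEq_zero_iff_dvd).mpr hdvd))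
    obtain ⟨u, hu⟩ := hpp
    have hku : k = p * u := by
      have h3 : p * k = p * (p * u) := by rw [hu]; ring
      exact Nat.eq_of_mul_eq_mul_left hp.pos h3
    have hk0 : 0 < k := by have := hp.two_le; omega
    have : p ≤ k := Nat.le_of_dvd hk0 ⟨u, hku⟩
    omega

lemma val_le {p a b c : ℕ} (hp : 2 ≤ p) (h : p ^ a ∣ p ^ b * c) (hc : ¬ p ∣ c) : a ≤ b := by
  by_contra hab
  push_neg at hab
  have h1 : p ^ b * p ∣ p ^ b * c := by
    calc p ^ b * p = p ^ (b + 1) := by ring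
    _ ∣ p ^ a := pow_dvd_pow _ (by omega)
    _ ∣ p ^ b * c := h
  exact hc ((Nat.mul_dvd_mul_iff_left (Nat.pow_pos (n := b) (by omega))).mp h1)

lemma phi_val {p : ℕ} (hp : p.Prime) (hop : Odd p) {y m ν c : ℕ}
    (hy : 2 ≤ y) (hyc : y - 1 = p ^ ν * c) (hc : ¬ p ∣ c) (hν : 2 ≤ ν)
    (heq : p * m = gs p y) :
    ∃ c', m - 1 = p ^ ν * c' ∧ ¬ p ∣ c' := by
  have h2 : p ^ 2 ∣ y - 1 := hyc ▸ Dvd.dvd.mul_right (pow_dvd_pow p hν) c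
  obtain ⟨hT1, hT2⟩ := T_facts hp hop h2 (by omega)
  obtain ⟨T', hT'⟩ := hT1
  have hT'p : ¬ p ∣ T' := fun ⟨u, hu⟩ => hT2 ⟨u, by rw [hT', hu]; ring⟩
  have hkey : p * m = p * (1 + p ^ ν * (c * T')) := by
    rw [heq, gs_eq p y (by omega), hyc, hT']
    ring
  have hm : m = 1 + p ^ ν * (c * T') := Nat.eq_of_mul_eq_mul_left hp.pos hkey
  refine ⟨c * T', by omega, fun hd => ?_⟩
  rcases (Nat.Prime.dvd_mul hp).mp hd with h | h
  · exact hc h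
  · exact hT'p h

lemma pow_val {p : ℕ} (hp : p.Prime) (hop : Odd p) {y ν c : ℕ}
    (hy : 2 ≤ y) (hyc : y - 1 = p ^ ν * c) (hc : ¬ p ∣ c) (hν : 2 ≤ ν) :
    ∃ c', y ^ p - 1 = p ^ (ν + 1) * c' ∧ ¬ p ∣ c' := by
  have h2 : p ^ 2 ∣ y - 1 := hyc ▸ Dvd.dvd.mul_right (pow_dvd_pow p hν) c
  obtain ⟨hT1, hT2⟩ := T_facts hp hop h2 (by omega)
  obtain ⟨T', hT'⟩ := hT1
  have hT'p : ¬ p ∣ T' := fun ⟨u, hu⟩ => hT2 ⟨u, by rw [hT', hu]; ring⟩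
  set u := 1 + p ^ ν * (c * T') with hu
  have hgs : gs p y = p * u := by
    rw [gs_eq p y (by omega), hyc, hT', hu]; ring
  have hup : ¬ p ∣ u := by
    intro hd
    have hd2 : p ∣ p ^ ν * (c * T') := dvd_mul_of_dvd_left (dvd_pow_self p (by omega)) _
    have : p ∣ 1 := by
      have := Nat.dvd_sub hd hd2
      simpa [hu] using this
    exact Nat.Prime.one_lt hp |>.ne' (Nat.dvd_one.mp this)
  refine ⟨c * u, ?_, fun hd => ?_⟩
  · have h1 : y ^ p = 1 + (y - 1) * gs p y := pow_eq_one_add y (by omega) p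
    rw [h1, hgs, hyc, Nat.add_sub_cancel_left, pow_succ]
    ring
  · rcases (Nat.Prime.dvd_mul hp).mp hd with h | h
    · exact hc h
    · exact hup h

lemma exp_dvd {p : ℕ} (hp : p.Prime) {w ν c h k : ℕ} (hw : 2 ≤ w)
    (hwc : w - 1 = p ^ ν * c) (hc : ¬ p ∣ c)
    (hk : k ≤ ν) (hd : p ^ (ν + k) ∣ w ^ h - 1) : p ^ k ∣ h := by
  have hid : w ^ h - 1 = p ^ ν * (c * gs h w) := by
    have := pow_eq_one_add w (by omega) h
    rw [this, hwc]; ring_nf; omega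
  rw [hid] at hd
  have h1 : p ^ k ∣ c * gs h w := by
    have : p ^ ν * p ^ k ∣ p ^ ν * (c * gs h w) := by rw [← pow_add]; exact hd
    exact (Nat.mul_dvd_mul_iff_left (Nat.pow_pos (n := ν) hp.pos)).mp this
  have h2 : p ^ k ∣ gs h w :=
    (Nat.Coprime.dvd_of_dvd_mul_left
      (Nat.Coprime.pow_left _ ((Nat.Prime.coprime_iff_not_dvd hp).mpr hc)) h1)
  haveI : NeZero (p ^ k) := ⟨pow_ne_zero _ hp.ne_zero⟩
  have hw1 : ((w : ℕ) : ZMod (p ^ k)) = 1 := by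
    obtain ⟨d, hdd⟩ : p ^ k ∣ w - 1 := hwc ▸ Dvd.dvd.mul_right (pow_dvd_pow p hk) c
    have hweq : w = 1 + p ^ k * d := by omega
    have hz : ((p : ZMod (p^k)))^k = 0 := by rw [← Nat.cast_pow, ZMod.natCast_self]
    rw [hweq]; push_cast; rw [hz]; ring
  have hgs0 : ((gs h w : ℕ) : ZMod (p ^ k)) = 0 :=
    (ZMod.natCast_eq_zero_iff _ _).mpr h2
  have : ((h : ℕ) : ZMod (p ^ k)) = 0 := by
    rw [← hgs0]
    push_cast [gs]
    simp [hw1]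
  exact (ZMod.natCast_eq_zero_iff _ _).mp this



lemma prime_dvd_phi_cong {p r k b : ℕ} (hp : p.Prime) (hr : r.Prime) (hrp : r ≠ p)
    (hk : 1 ≤ k) (hd : (r : ℤ) ∣ Phi (p ^ k) (b : ℤ)) : p ^ k ∣ r - 1 := by
  haveI : Fact r.Prime := ⟨hr⟩
  have hrpk : ¬ r ∣ p ^ k := fun h => hrp (((Nat.prime_dvd_prime_iff_eq hr hp).mp (hr.dvd_of_dvd_pow h)))
  haveI : NeZero ((p ^ k : ℕ) : ZMod r) := by
    constructor
    rw [Ne, ZMod.natCast_eq_zero_iff]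
    exact hrpk
  -- b is a root of cyclotomic (p^k) over ZMod r
  have hroot : Polynomial.IsRoot (Polynomial.cyclotomic (p ^ k) (ZMod r)) ((b : ℤ) : ZMod r) := by
    unfold Phi at hd
    have h0 : (((Polynomial.cyclotomic (p ^ k) ℤ).eval (b : ℤ) : ℤ) : ZMod r) = 0 := by
      rwa [ZMod.intCast_zmod_eq_zero_iff_dvd]
    rw [Polynomial.IsRoot, ← Polynomial.map_cyclotomic_int (p ^ k) (ZMod r),
      Polynomial.eval_intCast_map]
    exact h0
  haveI : NeZero ((p ^ k : ℕ) : ZMod r) := by assumption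
  have hprim : IsPrimitiveRoot (((b : ℤ) : ZMod r)) (p ^ k) := by
    rwa [Polynomial.isRoot_cyclotomic_iff] at hroot
  have hb0 : ((b : ℤ) : ZMod r) ≠ 0 := by
    intro h0
    have h1 := hprim.pow_eq_one
    rw [h0] at h1
    rw [zero_pow (pow_ne_zero _ hp.ne_zero)] at h1
    exact zero_ne_one h1
  have hord : orderOf (((b : ℤ) : ZMod r)) = p ^ k := hprim.eq_orderOf.symm
  have hpow : (((b : ℤ) : ZMod r)) ^ (r - 1) = 1 := ZMod.pow_card_sub_one_eq_one hb0
  rw [← hord]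
  exact orderOf_dvd_of_pow_eq_one hpow


lemma two_pow_le {p X : ℕ} (hp : 13 ≤ p) (hX : 3 * p ≤ 2 * X) : 2 ^ X * p ^ (p - 1) ≤ p ^ X := by
  have h8 : (8:ℕ) ≤ p := by omega
  have h1 : X ≤ 3 * (X - p + 1) := by omega
  calc 2 ^ X * p ^ (p-1) ≤ 2 ^ (3 * (X - p + 1)) * p ^ (p-1) :=
        Nat.mul_le_mul_right _ (Nat.pow_le_pow_right (by norm_num) h1)
  _ = 8 ^ (X - p + 1) * p ^ (p - 1) := by rw [pow_mul]; norm_num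
  _ ≤ p ^ (X - p + 1) * p ^ (p - 1) :=
        Nat.mul_le_mul_right _ (Nat.pow_le_pow_left h8 _)
  _ = p ^ (X - p + 1 + (p - 1)) := by rw [← pow_add]
  _ = p ^ X := by congr 1; omega

lemma size_chain {p x y z h k f : ℕ} (hp13 : 13 ≤ p) (hx : 2 ≤ x) (hk0 : 0 < k)
    (i_low : z ^ (p^2*(p-1)) < p * x ^ h) (i_up : p * x ^ h < 2 * z ^ (p^2*(p-1)))
    (ii_low : z ^ (p*(p-1)) < p * y ^ k) (ii_up : p * y ^ k < 2 * z ^ (p*(p-1)))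
    (iii_low : y ^ (p-1) < p * x ^ f) (iii_up : p * x ^ f < 2 * y ^ (p-1)) :
    p * k * f < h * (p - 1) ∧ x ^ (h * (p-1) - p * k * f) < p ^ (p * (p-1) + k * p) := by
  have hkp : k * p ≠ 0 := by positivity
  have hpp : p * (p-1) ≠ 0 := by
    have : 0 < p * (p - 1) := Nat.mul_pos (by omega) (by omega)
    omega
  have hp1 : (p:ℕ) - 1 ≠ 0 := by omega
  have hEpos : p * k * f < h * (p - 1) := by
    by_contra hcon
    push_neg at hcon   -- h * (p-1) ≤ p * k * f
    have D1 : (p * x ^ f) ^ (k * p) < (2 * y ^ (p-1)) ^ (k*p) :=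
      Nat.pow_lt_pow_left iii_up hkp
    have D2 : (p * y ^ k) ^ (p*(p-1)) < (2 * z ^ (p*(p-1))) ^ (p*(p-1)) :=
      Nat.pow_lt_pow_left ii_up hpp
    have D3 : (z ^ (p^2*(p-1))) ^ (p-1) < (p * x ^ h) ^ (p-1) :=
      Nat.pow_lt_pow_left i_low hp1
    -- assemble
    have C1 : p ^ (k*p + p*(p-1)) * x ^ (p*k*f) <
        2 ^ (k*p) * (p ^ (p*(p-1)) * y ^ (k*(p*(p-1)))) := by
      calc p ^ (k*p + p*(p-1)) * x ^ (p*k*f)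
          = (p * x ^ f) ^ (k*p) * p ^ (p*(p-1)) := by ring
      _ < (2 * y ^ (p-1)) ^ (k*p) * p ^ (p*(p-1)) := (Nat.mul_lt_mul_right (by positivity)).mpr D1
      _ = 2 ^ (k*p) * (p ^ (p*(p-1)) * y ^ (k*(p*(p-1)))) := by ring
    have C2 : p ^ (p*(p-1)) * y ^ (k*(p*(p-1))) < 2 ^ (p*(p-1)) * (z ^ (p^2*(p-1))) ^ (p-1) := by
      calc p ^ (p*(p-1)) * y ^ (k*(p*(p-1))) = (p * y ^ k) ^ (p*(p-1)) := by ring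
      _ < (2 * z ^ (p*(p-1))) ^ (p*(p-1)) := D2
      _ = 2 ^ (p*(p-1)) * (z ^ (p^2*(p-1))) ^ (p-1) := by ring
    have C3 : (z ^ (p^2*(p-1))) ^ (p-1) < p ^ (p-1) * x ^ (h*(p-1)) := by
      calc (z ^ (p^2*(p-1))) ^ (p-1) < (p * x ^ h) ^ (p-1) := D3
      _ = p ^ (p-1) * x ^ (h*(p-1)) := by ring
    have C4 : p ^ (k*p + p*(p-1)) * x ^ (p*k*f) <
        2 ^ (k*p + p*(p-1)) * p ^ (p-1) * x ^ (p*k*f) := by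
      calc p ^ (k*p + p*(p-1)) * x ^ (p*k*f)
          < 2 ^ (k*p) * (p ^ (p*(p-1)) * y ^ (k*(p*(p-1)))) := C1
      _ ≤ 2 ^ (k*p) * (2 ^ (p*(p-1)) * (z ^ (p^2*(p-1))) ^ (p-1)) :=
          Nat.mul_le_mul_left _ (le_of_lt C2)
      _ ≤ 2 ^ (k*p) * (2 ^ (p*(p-1)) * (p ^ (p-1) * x ^ (h*(p-1)))) :=
          Nat.mul_le_mul_left _ (Nat.mul_le_mul_left _ (le_of_lt C3))
      _ = 2 ^ (k*p + p*(p-1)) * p ^ (p-1) * x ^ (h*(p-1)) := by ring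
      _ ≤ 2 ^ (k*p + p*(p-1)) * p ^ (p-1) * x ^ (p*k*f) :=
          Nat.mul_le_mul_left _ (Nat.pow_le_pow_right (by omega) hcon)
    have C5 : p ^ (k*p + p*(p-1)) < 2 ^ (k*p + p*(p-1)) * p ^ (p-1) :=
      Nat.lt_of_mul_lt_mul_right C4
    have C6 : 2 ^ (k*p + p*(p-1)) * p ^ (p-1) ≤ p ^ (k*p + p*(p-1)) := by
      apply two_pow_le hp13
      have h12 : 12 * p ≤ p * (p-1) := by
        calc 12 * p ≤ (p-1) * p := Nat.mul_le_mul_right p (by omega)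
        _ = p * (p-1) := mul_comm _ _
      omega
    exact Nat.lt_irrefl _ (C5.trans_le C6)
  refine ⟨hEpos, ?_⟩
  have U1 : (p * x ^ h) ^ (p-1) < (2 * z ^ (p^2*(p-1))) ^ (p-1) := Nat.pow_lt_pow_left i_up hp1
  have U2 : (z ^ (p*(p-1))) ^ (p*(p-1)) < (p * y ^ k) ^ (p*(p-1)) := Nat.pow_lt_pow_left ii_low hpp
  have U3 : (y ^ (p-1)) ^ (k*p) < (p * x ^ f) ^ (k*p) := Nat.pow_lt_pow_left iii_low hkp
  have V1 : p ^ (p-1) * x ^ (h*(p-1)) < 2 ^ (p-1) * (p ^ (p*(p-1) + k*p) * x ^ (p*k*f)) := by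
    calc p ^ (p-1) * x ^ (h*(p-1)) = (p * x ^ h) ^ (p-1) := by ring
    _ < (2 * z ^ (p^2*(p-1))) ^ (p-1) := U1
    _ = 2 ^ (p-1) * (z ^ (p*(p-1))) ^ (p*(p-1)) := by ring
    _ ≤ 2 ^ (p-1) * (p * y ^ k) ^ (p*(p-1)) := Nat.mul_le_mul_left _ (le_of_lt U2)
    _ = 2 ^ (p-1) * (p ^ (p*(p-1)) * (y ^ (p-1)) ^ (k*p)) := by ring
    _ ≤ 2 ^ (p-1) * (p ^ (p*(p-1)) * (p * x ^ f) ^ (k*p)) :=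
        Nat.mul_le_mul_left _ (Nat.mul_le_mul_left _ (le_of_lt U3))
    _ = 2 ^ (p-1) * (p ^ (p*(p-1) + k*p) * x ^ (p*k*f)) := by ring
  have V2 : p ^ (p-1) * x ^ (h*(p-1)) < p ^ (p-1) * (p ^ (p*(p-1) + k*p) * x ^ (p*k*f)) := by
    calc p ^ (p-1) * x ^ (h*(p-1)) < 2 ^ (p-1) * (p ^ (p*(p-1) + k*p) * x ^ (p*k*f)) := V1
    _ ≤ p ^ (p-1) * (p ^ (p*(p-1) + k*p) * x ^ (p*k*f)) :=
        Nat.mul_le_mul_right _ (Nat.pow_le_pow_left (by omega) _)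
  have V3 : x ^ (h*(p-1)) < p ^ (p*(p-1) + k*p) * x ^ (p*k*f) :=
    Nat.lt_of_mul_lt_mul_left V2
  have V4 : x ^ (p*k*f) * x ^ (h*(p-1) - p*k*f) < x ^ (p*k*f) * p ^ (p*(p-1) + k*p) := by
    calc x ^ (p*k*f) * x ^ (h*(p-1) - p*k*f) = x ^ (h*(p-1)) := by
          rw [← pow_add]; congr 1; omega
    _ < p ^ (p*(p-1) + k*p) * x ^ (p*k*f) := V3
    _ = x ^ (p*k*f) * p ^ (p*(p-1) + k*p) := by ring
  exact Nat.lt_of_mul_lt_mul_left V4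

lemma e4_lemma {p : ℕ} (hp : 13 ≤ p) : (p^2 + 2 - p) * (p-1) ≤ p * (p+3) * (p-3) := by
  obtain ⟨u, hu1⟩ : ∃ u, p = u + 1 := ⟨p - 1, by omega⟩
  obtain ⟨v, hv1⟩ : ∃ v, p = v + 3 := ⟨p - 3, by omega⟩
  obtain ⟨w', hw1⟩ : ∃ w', p^2 + 2 = w' + p := ⟨p^2 + 2 - p, by have := Nat.le_self_pow (two_ne_zero) p; omega⟩
  have h1 : p - 1 = u := by omega
  have h2 : p - 3 = v := by omega
  have h3 : p^2 + 2 - p = w' := by omega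
  rw [h1, h2, h3]
  nlinarith [hu1, hv1, hw1, hp]

lemma hexp_lemma {p h₁ : ℕ} (hp : 13 ≤ p) (hh : h₁ + p ≤ p^2 + 2) :
    1 + (2*p+1) * h₁ ≤ 2*(p*(p-1)) + 2*(p^2*(p-1)) := by
  obtain ⟨u, hu1⟩ : ∃ u, p = u + 1 := ⟨p - 1, by omega⟩
  have h1 : p - 1 = u := by omega
  rw [h1]
  nlinarith [hu1, hp, hh]

theorem ell_lt_thirteen
    (N p α s : ℕ) (q β : Fin s → ℕ)
    (hN : N = p ^ α * ∏ i, q i ^ (2 * β i))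
    (hodd : Odd N)
    (hperf : ArithmeticFunction.sigma 1 N = 2 * N)
    (hp : p.Prime) (hpodd : Odd p)
    (hq : ∀ i, (q i).Prime) (hqodd : ∀ i, Odd (q i))
    (hinj : Function.Injective q)
    (hpq : ∀ i, p ≠ q i)
    (hα4 : α % 4 = 1) (hp4 : p % 4 = 1)
    (hαpos : 0 < α) (hβpos : ∀ i, 0 < β i)
    (hk : ∀ i, p ^ 2 ∣ 2 * β i + 1)
    (hnd : ¬ p ^ 10 ∣ N)
    (i₁ i₂ i₃ i₄ : Fin s)
    (hij : i₁ ≠ i₂ ∧ i₁ ≠ i₃ ∧ i₁ ≠ i₄ ∧ i₂ ≠ i₃ ∧ i₂ ≠ i₄ ∧ i₃ ≠ i₄)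
    (hS : ∀ i, q i ≡ 1 [MOD p] ↔ i ∈ ({i₁, i₂, i₃, i₄} : Finset (Fin s)))
    (hβ1 : 2 * β i₁ + 1 = p ^ 2) (hβ2 : 2 * β i₂ + 1 = p ^ 2)
    (hβ3 : 2 * β i₃ + 1 = p ^ 2) (hβ4 : 2 * β i₄ + 1 = p ^ 3)
    (h₁ : ℕ) (hh₁ : 0 < h₁)
    (hΦ3 : Phi (p ^ 3) (q i₄) = p * (q i₁ : ℤ) ^ h₁)
    (hΦ12 : ∃ h₂ h₃ : ℕ, 0 < h₂ ∧ 0 < h₃ ∧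
      ((Phi p (q i₄) = p * (q i₂ : ℤ) ^ h₂ ∧ Phi (p ^ 2) (q i₄) = p * (q i₃ : ℤ) ^ h₃) ∨
       (Phi p (q i₄) = p * (q i₃ : ℤ) ^ h₃ ∧ Phi (p ^ 2) (q i₄) = p * (q i₂ : ℤ) ^ h₂)))
    (e₂ e₃ e₄ : ℕ) (he₂ : 0 < e₂) (he₃ : 0 < e₃) (he₄ : 0 < e₄) (hℓe₄ : p ∣ e₄)
    (hA : Phi p (q i₁) = p * (q i₃ : ℤ) ^ e₃)
    (hB : Phi (p ^ 2) (q i₁) = p * (q i₂ : ℤ) ^ e₂ * (q i₄ : ℤ) ^ e₄)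
    (f₁ : ℕ) (hf₁ : 0 < f₁)
    (hC : Phi p (q i₂) = p * (q i₁ : ℤ) ^ f₁)
    (hh₁ℓ : p ≤ h₁)
    (hf₁ℓ : p - 3 ≤ f₁) :
    p < 13 := by
  by_contra hlt
  push_neg at hlt
  have hp2 : 2 ≤ p := hp.two_le
  have hq1_2 : 2 ≤ q i₁ := (hq i₁).two_le
  have hq2_2 : 2 ≤ q i₂ := (hq i₂).two_le
  have hq4_2 : 2 ≤ q i₄ := (hq i₄).two_le
  -- ℕ versions of the cyclotomic equations
  have eq1 : p * q i₁ ^ h₁ = gs p (q i₄ ^ p ^ 2) := by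
    have h := Phi_eq_gs hp 2 (q i₄)
    norm_num at h
    rw [h] at hΦ3
    exact_mod_cast hΦ3.symm
  have eq3 : p * q i₁ ^ f₁ = gs p (q i₂) := by
    have h := Phi_eq_gs hp 0 (q i₂)
    norm_num at h
    rw [h] at hC
    exact_mod_cast hC.symm
  -- congruence conditions from prime divisors of cyclotomic values
  have hcong1 : p ^ 3 ∣ q i₁ - 1 := by
    apply prime_dvd_phi_cong hp (hq i₁) (Ne.symm (hpq i₁)) (by omega)
    rw [hΦ3]
    exact dvd_mul_of_dvd_right (dvd_pow_self _ (by omega)) _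
  have hcong2 : p ^ 2 ∣ q i₂ - 1 := by
    apply prime_dvd_phi_cong hp (hq i₂) (Ne.symm (hpq i₂)) (by omega)
    rw [hB]
    exact dvd_mul_of_dvd_left (dvd_mul_of_dvd_right (dvd_pow_self _ (by omega)) _) _
  have hcong4 : p ^ 2 ∣ q i₄ - 1 := by
    apply prime_dvd_phi_cong hp (hq i₄) (Ne.symm (hpq i₄)) (by omega)
    rw [hB]
    exact Dvd.dvd.mul_left (dvd_pow_self _ (by omega)) _
  -- exact p-adic valuations of q_i - 1
  have h10 : q i₁ - 1 ≠ 0 := by omega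
  have h20 : q i₂ - 1 ≠ 0 := by omega
  have h40 : q i₄ - 1 ≠ 0 := by omega
  set ν₁ := (q i₁ - 1).factorization p with hν₁def
  set ν₂ := (q i₂ - 1).factorization p with hν₂def
  set ν₄ := (q i₄ - 1).factorization p with hν₄def
  have hfac1 : q i₁ - 1 = p ^ ν₁ * ((q i₁ - 1) / p ^ ν₁) :=
    (Nat.ordProj_mul_ordCompl_eq_self _ p).symm
  have hfac2 : q i₂ - 1 = p ^ ν₂ * ((q i₂ - 1) / p ^ ν₂) :=
    (Nat.ordProj_mul_ordCompl_eq_self _ p).symm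
  have hfac4 : q i₄ - 1 = p ^ ν₄ * ((q i₄ - 1) / p ^ ν₄) :=
    (Nat.ordProj_mul_ordCompl_eq_self _ p).symm
  have hc1 : ¬ p ∣ (q i₁ - 1) / p ^ ν₁ := Nat.not_dvd_ordCompl hp h10
  have hc2 : ¬ p ∣ (q i₂ - 1) / p ^ ν₂ := Nat.not_dvd_ordCompl hp h20
  have hc4 : ¬ p ∣ (q i₄ - 1) / p ^ ν₄ := Nat.not_dvd_ordCompl hp h40
  have hν₁3 : 3 ≤ ν₁ := (Nat.Prime.pow_dvd_iff_le_factorization hp h10).mp hcong1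
  have hν₂2 : 2 ≤ ν₂ := (Nat.Prime.pow_dvd_iff_le_factorization hp h20).mp hcong2
  have hν₄2 : 2 ≤ ν₄ := (Nat.Prime.pow_dvd_iff_le_factorization hp h40).mp hcong4
  -- exact valuation of q1^f₁ - 1  (equals ν₂)
  obtain ⟨d₂, hd₂, hd₂p⟩ := phi_val hp hpodd hq2_2 hfac2 hc2 hν₂2 eq3
  have hsub1 : q i₁ - 1 ∣ q i₁ ^ f₁ - 1 := by
    refine ⟨gs f₁ (q i₁), ?_⟩
    have := pow_eq_one_add (q i₁) (by omega) f₁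
    omega
  have hν12 : ν₁ ≤ ν₂ := by
    refine val_le hp2 (c := d₂) ?_ hd₂p
    rw [← hd₂]
    exact dvd_trans ⟨(q i₁ - 1) / p ^ ν₁, hfac1⟩ hsub1
  -- valuations along q4 powers
  obtain ⟨c4a, hc4a, hc4ap⟩ := pow_val hp hpodd hq4_2 hfac4 hc4 hν₄2
  have h2q4p : 2 ≤ q i₄ ^ p := le_trans hq4_2 (Nat.le_self_pow (by omega) _)
  obtain ⟨c4b, hc4b, hc4bp⟩ := pow_val hp hpodd h2q4p hc4a hc4ap (by omega)
  have hq4pp : (q i₄ ^ p) ^ p = q i₄ ^ p ^ 2 := by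
    rw [← pow_mul, pow_two]
  rw [hq4pp] at hc4b
  have hc4b' : q i₄ ^ p ^ 2 - 1 = p ^ (ν₄ + 2) * c4b := by
    rw [hc4b]
  have h2q4pp : 2 ≤ q i₄ ^ p ^ 2 := le_trans hq4_2 (Nat.le_self_pow (by positivity) _)
  -- exact valuation of q1^h₁ - 1 (equals ν₄ + 2)
  obtain ⟨z, hz, hzp⟩ := phi_val hp hpodd h2q4pp hc4b' hc4bp (by omega) eq1
  -- the sigma-count: h₁ + f₁ + 1 ≤ p^2
  have hcount : h₁ + f₁ + 1 ≤ p ^ 2 := by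
    classical
    set g : Fin s → ℕ := fun i => q i ^ (2 * β i) with hg
    have hσprod : ArithmeticFunction.sigma 1 (∏ i, g i) =
        ∏ i, ArithmeticFunction.sigma 1 (g i) := by
      apply ArithmeticFunction.IsMultiplicative.map_prod g
        ArithmeticFunction.isMultiplicative_sigma
      intro i _ j _ hij'
      exact Nat.Coprime.pow _ _ ((Nat.coprime_primes (hq i) (hq j)).mpr
        (fun he => hij' (hinj he)))
    have hcopP : Nat.Coprime (p ^ α) (∏ i, g i) := by
      apply Nat.Coprime.pow_left
      apply Nat.Coprime.prod_right
      intro i _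
      exact Nat.Coprime.pow_right _ ((Nat.coprime_primes hp (hq i)).mpr (hpq i))
    have hσN : ArithmeticFunction.sigma 1 N =
        ArithmeticFunction.sigma 1 (p ^ α) * ∏ i, ArithmeticFunction.sigma 1 (g i) := by
      rw [hN, ArithmeticFunction.IsMultiplicative.map_mul_of_coprime
        ArithmeticFunction.isMultiplicative_sigma hcopP, hσprod]
    have hσq2 : ArithmeticFunction.sigma 1 (g i₂) = gs (p ^ 2) (q i₂) := by
      rw [hg]
      simp only
      rw [ArithmeticFunction.sigma_one_apply_prime_pow (hq i₂), ← hβ2]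
      rfl
    have hσq4 : ArithmeticFunction.sigma 1 (g i₄) = gs (p ^ 3) (q i₄) := by
      rw [hg]
      simp only
      rw [ArithmeticFunction.sigma_one_apply_prime_pow (hq i₄), ← hβ4]
      rfl
    have hdvd24 : ArithmeticFunction.sigma 1 (g i₂) * ArithmeticFunction.sigma 1 (g i₄) ∣
        ArithmeticFunction.sigma 1 N := by
      rw [hσN]
      apply Dvd.dvd.mul_left
      have hsub : ({i₂, i₄} : Finset (Fin s)) ⊆ Finset.univ := Finset.subset_univ _
      have hh := Finset.prod_dvd_prod_of_subset _ _
        (fun i => ArithmeticFunction.sigma 1 (g i)) hsub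
      rwa [Finset.prod_pair hij.2.2.2.2.1] at hh
    have hq1f : q i₁ ^ f₁ ∣ ArithmeticFunction.sigma 1 (g i₂) := by
      rw [hσq2]
      have hdphi : Phi p (q i₂) ∣ ((gs (p ^ 2) (q i₂) : ℕ) : ℤ) :=
        Phi_dvd_gs (dvd_pow_self p (by omega)) hp.ne_one _
      have hqd : ((q i₁ : ℤ)) ^ f₁ ∣ Phi p (q i₂) := by
        rw [hC]; exact dvd_mul_left _ _
      have := dvd_trans hqd hdphi
      have h2 : ((q i₁ ^ f₁ : ℕ) : ℤ) ∣ ((gs (p ^ 2) (q i₂) : ℕ) : ℤ) := by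
        push_cast
        exact this
      exact_mod_cast h2
    have hq1h : q i₁ ^ h₁ ∣ ArithmeticFunction.sigma 1 (g i₄) := by
      rw [hσq4]
      have hdphi : Phi (p ^ 3) (q i₄) ∣ ((gs (p ^ 3) (q i₄) : ℕ) : ℤ) :=
        Phi_dvd_gs dvd_rfl (by
          intro hone
          have := hp2
          have : p ^ 3 ≥ 2 ^ 3 := Nat.pow_le_pow_left hp2 3
          omega) _
      have hqd : ((q i₁ : ℤ)) ^ h₁ ∣ Phi (p ^ 3) (q i₄) := by
        rw [hΦ3]; exact dvd_mul_left _ _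
      have := dvd_trans hqd hdphi
      have h2 : ((q i₁ ^ h₁ : ℕ) : ℤ) ∣ ((gs (p ^ 3) (q i₄) : ℕ) : ℤ) := by
        push_cast
        exact this
      exact_mod_cast h2
    have hq1tot : q i₁ ^ (h₁ + f₁) ∣ 2 * N := by
      rw [← hperf]
      calc q i₁ ^ (h₁ + f₁) = q i₁ ^ f₁ * q i₁ ^ h₁ := by rw [← pow_add]; ring_nf
      _ ∣ ArithmeticFunction.sigma 1 (g i₂) * ArithmeticFunction.sigma 1 (g i₄) :=
          mul_dvd_mul hq1f hq1h
      _ ∣ ArithmeticFunction.sigma 1 N := hdvd24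
    have h2N : 2 * N = q i₁ ^ (2 * β i₁) *
        (2 * p ^ α * ∏ i ∈ Finset.univ.erase i₁, g i) := by
      rw [hN]
      have hP : (∏ i, q i ^ (2 * β i)) = g i₁ * ∏ i ∈ Finset.univ.erase i₁, g i :=
        (Finset.mul_prod_erase _ _ (Finset.mem_univ i₁)).symm
      rw [hP, hg]
      ring
    have hnd1 : ¬ q i₁ ∣ (2 * p ^ α * ∏ i ∈ Finset.univ.erase i₁, g i) := by
      intro hdv
      rcases (Nat.Prime.dvd_mul (hq i₁)).mp hdv with h | h
      · rcases (Nat.Prime.dvd_mul (hq i₁)).mp h with h' | h'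
        · have h2' := (Nat.prime_dvd_prime_iff_eq (hq i₁) Nat.prime_two).mp h'
          rcases hqodd i₁ with ⟨t, ht⟩
          omega
        · have hdp := (hq i₁).dvd_of_dvd_pow h'
          have := (Nat.prime_dvd_prime_iff_eq (hq i₁) hp).mp hdp
          exact (hpq i₁) this.symm
      · obtain ⟨j, hj, hjd⟩ := (Prime.dvd_finset_prod_iff (Nat.Prime.prime (hq i₁)) _).mp h
        have hdq := (hq i₁).dvd_of_dvd_pow hjd
        have heq := (Nat.prime_dvd_prime_iff_eq (hq i₁) (hq j)).mp hdq
        have hj1 : i₁ = j := hinj heq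
        rw [← hj1] at hj
        exact (Finset.mem_erase.mp hj).1 rfl
    have hle : h₁ + f₁ ≤ 2 * β i₁ := by
      refine val_le (hq i₁).two_le (c := 2 * p ^ α * ∏ i ∈ Finset.univ.erase i₁, g i) ?_ hnd1
      rw [← h2N]
      exact hq1tot
    omega
  -- case split on the shape of Φ_p(q₄), Φ_{p²}(q₄)
  obtain ⟨h₂, h₃, hh₂, hh₃, hcase⟩ := hΦ12
  rcases hcase with ⟨hcA, _⟩ | ⟨_, hcB⟩
  · -- Case A : Φ_p(q₄) = p q₂^{h₂} ; we get p² ∣ h₁, contradiction with the count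
    have eqA : p * q i₂ ^ h₂ = gs p (q i₄) := by
      have h := Phi_eq_gs hp 0 (q i₄)
      norm_num at h
      rw [h] at hcA
      exact_mod_cast hcA.symm
    obtain ⟨w, hw, hwp⟩ := phi_val hp hpodd hq4_2 hfac4 hc4 hν₄2 eqA
    have hsub2 : q i₂ - 1 ∣ q i₂ ^ h₂ - 1 := by
      refine ⟨gs h₂ (q i₂), ?_⟩
      have := pow_eq_one_add (q i₂) (by omega) h₂
      omega
    have hν24 : ν₂ ≤ ν₄ := by
      refine val_le hp2 (c := w) ?_ hwp
      rw [← hw]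
      exact dvd_trans ⟨(q i₂ - 1) / p ^ ν₂, hfac2⟩ hsub2
    have hdvd12 : p ^ (ν₁ + 2) ∣ q i₁ ^ h₁ - 1 := by
      rw [hz]
      exact Dvd.dvd.mul_right (pow_dvd_pow p (by omega)) z
    have hp2h : p ^ 2 ∣ h₁ := exp_dvd hp hq1_2 hfac1 hc1 (by omega) hdvd12
    have : p ^ 2 ≤ h₁ := Nat.le_of_dvd hh₁ hp2h
    omega
  · -- Case B : Φ_{p²}(q₄) = p q₂^{h₂} ; size contradiction
    have eqB : p * q i₂ ^ h₂ = gs p (q i₄ ^ p) := by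
      have h := Phi_eq_gs hp 1 (q i₄)
      norm_num at h
      rw [h] at hcB
      exact_mod_cast hcB.symm
    obtain ⟨w, hw, hwp⟩ := phi_val hp hpodd h2q4p hc4a hc4ap (by omega) eqB
    have hsub2 : q i₂ - 1 ∣ q i₂ ^ h₂ - 1 := by
      refine ⟨gs h₂ (q i₂), ?_⟩
      have := pow_eq_one_add (q i₂) (by omega) h₂
      omega
    have hν24 : ν₂ ≤ ν₄ + 1 := by
      refine val_le hp2 (c := w) ?_ hwp
      rw [← hw]
      exact dvd_trans ⟨(q i₂ - 1) / p ^ ν₂, hfac2⟩ hsub2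
    have hdvd11 : p ^ (ν₁ + 1) ∣ q i₁ ^ h₁ - 1 := by
      rw [hz]
      exact Dvd.dvd.mul_right (pow_dvd_pow p (by omega)) z
    have hph : p ∣ h₁ := by
      have := exp_dvd hp hq1_2 hfac1 hc1 (show 1 ≤ ν₁ by omega) hdvd11
      simpa using this
    -- size inequalities
    have i_low : q i₄ ^ (p ^ 2 * (p - 1)) < p * q i₁ ^ h₁ := by
      have hgl := gs_lower (y := q i₄ ^ p ^ 2) (n := p) h2q4pp hp2
      rw [← eq1] at hgl
      calc q i₄ ^ (p ^ 2 * (p - 1)) = (q i₄ ^ p ^ 2) ^ (p - 1) := by rw [← pow_mul]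
      _ < p * q i₁ ^ h₁ := hgl
    have i_up : p * q i₁ ^ h₁ < 2 * q i₄ ^ (p ^ 2 * (p - 1)) := by
      have hgu := gs_upper (y := q i₄ ^ p ^ 2) (n := p) h2q4pp (by omega)
      rw [← eq1] at hgu
      calc p * q i₁ ^ h₁ < 2 * (q i₄ ^ p ^ 2) ^ (p - 1) := hgu
      _ = 2 * q i₄ ^ (p ^ 2 * (p - 1)) := by rw [← pow_mul]
    have ii_low : q i₄ ^ (p * (p - 1)) < p * q i₂ ^ h₂ := by
      have hgl := gs_lower (y := q i₄ ^ p) (n := p) h2q4p hp2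
      rw [← eqB] at hgl
      calc q i₄ ^ (p * (p - 1)) = (q i₄ ^ p) ^ (p - 1) := by rw [← pow_mul]
      _ < p * q i₂ ^ h₂ := hgl
    have ii_up : p * q i₂ ^ h₂ < 2 * q i₄ ^ (p * (p - 1)) := by
      have hgu := gs_upper (y := q i₄ ^ p) (n := p) h2q4p (by omega)
      rw [← eqB] at hgu
      calc p * q i₂ ^ h₂ < 2 * (q i₄ ^ p) ^ (p - 1) := hgu
      _ = 2 * q i₄ ^ (p * (p - 1)) := by rw [← pow_mul]
    have iii_low : q i₂ ^ (p - 1) < p * q i₁ ^ f₁ := by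
      have hgl := gs_lower (y := q i₂) (n := p) hq2_2 hp2
      rw [← eq3] at hgl
      exact hgl
    have iii_up : p * q i₁ ^ f₁ < 2 * q i₂ ^ (p - 1) := by
      have hgu := gs_upper (y := q i₂) (n := p) hq2_2 (by omega)
      rw [← eq3] at hgu
      exact hgu
    obtain ⟨hE, hxE⟩ := size_chain hlt hq1_2 hh₂ i_low i_up ii_low ii_up iii_low iii_up
    -- E := h₁(p-1) - p h₂ f₁ is a positive multiple of p
    have hpE : p ∣ h₁ * (p - 1) - p * h₂ * f₁ :=
      Nat.dvd_sub (Dvd.dvd.mul_right hph _) ⟨h₂ * f₁, by ring⟩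
    have hEp : p ≤ h₁ * (p - 1) - p * h₂ * f₁ := Nat.le_of_dvd (by omega) hpE
    -- q₁ < p^(p-1+h₂)
    have hq1lt : q i₁ < p ^ (p - 1 + h₂) := by
      have h5 : q i₁ ^ p < (p ^ (p - 1 + h₂)) ^ p := by
        calc q i₁ ^ p ≤ q i₁ ^ (h₁ * (p - 1) - p * h₂ * f₁) :=
              Nat.pow_le_pow_right (by omega) hEp
        _ < p ^ (p * (p - 1) + h₂ * p) := hxE
        _ = (p ^ (p - 1 + h₂)) ^ p := by rw [← pow_mul]; congr 1; ring
      exact lt_of_pow_lt_pow_left₀ p (Nat.zero_le _) h5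
    -- bounds on h₁ and h₂
    have hh₁b : h₁ + p ≤ p ^ 2 + 2 := by omega
    have hh₂b : h₂ ≤ p + 2 := by
      by_contra hcon
      push_neg at hcon
      have e1 : p * h₂ * (p - 3) ≤ p * h₂ * f₁ := Nat.mul_le_mul_left _ hf₁ℓ
      have e2 : p * (p + 3) * (p - 3) ≤ p * h₂ * (p - 3) :=
        Nat.mul_le_mul_right _ (Nat.mul_le_mul_left _ (by omega))
      have e3 : h₁ * (p - 1) ≤ (p ^ 2 + 2 - p) * (p - 1) :=
        Nat.mul_le_mul_right _ (by omega)
      have e4 : (p ^ 2 + 2 - p) * (p - 1) ≤ p * (p + 3) * (p - 3) := e4_lemma hlt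
      omega
    -- q₄ ≥ 2p² + 1
    have hq4big : 2 * p ^ 2 < q i₄ := by
      have h2d : 2 ∣ q i₄ - 1 := by
        rcases hqodd i₄ with ⟨t, ht⟩
        omega
      have hcop : Nat.Coprime 2 (p ^ 2) :=
        Nat.Coprime.pow_right _ (Nat.coprime_two_left.mpr hpodd)
      have := Nat.Coprime.mul_dvd_of_dvd_of_dvd hcop h2d hcong4
      have := Nat.le_of_dvd (by omega) this
      omega
    -- final numeric contradiction
    have hM0 : p ^ 2 * (p - 1) ≠ 0 := by
      have : 0 < p ^ 2 * (p - 1) := Nat.mul_pos (by positivity) (by omega)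
      omega
    have F1 : (2 * p ^ 2) ^ (p ^ 2 * (p - 1)) < q i₄ ^ (p ^ 2 * (p - 1)) :=
      Nat.pow_lt_pow_left hq4big hM0
    have F3 : p * q i₁ ^ h₁ ≤ p ^ (1 + (2 * p + 1) * h₁) := by
      have hq1le : q i₁ ≤ p ^ (2 * p + 1) := by
        calc q i₁ ≤ p ^ (p - 1 + h₂) := le_of_lt hq1lt
        _ ≤ p ^ (2 * p + 1) := Nat.pow_le_pow_right (by omega) (by omega)
      calc p * q i₁ ^ h₁ ≤ p * (p ^ (2 * p + 1)) ^ h₁ :=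
            Nat.mul_le_mul_left _ (Nat.pow_le_pow_left hq1le _)
      _ = p ^ (1 + (2 * p + 1) * h₁) := by rw [← pow_mul, pow_add, pow_one]
    have F4 : p ^ (1 + (2 * p + 1) * h₁) ≤ (2 * p ^ 2) ^ (p ^ 2 * (p - 1)) := by
      have hexp : 1 + (2 * p + 1) * h₁ ≤ 2 * (p * (p - 1)) + 2 * (p ^ 2 * (p - 1)) :=
        hexp_lemma hlt hh₁b
      have h2M : p ^ (2 * (p * (p - 1))) ≤ 2 ^ (p ^ 2 * (p - 1)) := by
        have hsq : p ^ 2 ≤ 2 ^ p := sq_le_two_pow (by omega)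
        calc p ^ (2 * (p * (p - 1))) = (p ^ 2) ^ (p * (p - 1)) := by rw [← pow_mul]
        _ ≤ (2 ^ p) ^ (p * (p - 1)) := Nat.pow_le_pow_left hsq _
        _ = 2 ^ (p ^ 2 * (p - 1)) := by
              rw [show p ^ 2 * (p - 1) = p * (p * (p - 1)) from by ring,
                pow_mul 2 p (p * (p - 1))]
      calc p ^ (1 + (2 * p + 1) * h₁) ≤ p ^ (2 * (p * (p - 1)) + 2 * (p ^ 2 * (p - 1))) :=
            Nat.pow_le_pow_right (by omega) hexp
      _ = p ^ (2 * (p * (p - 1))) * p ^ (2 * (p ^ 2 * (p - 1))) := by rw [← pow_add]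
      _ ≤ 2 ^ (p ^ 2 * (p - 1)) * p ^ (2 * (p ^ 2 * (p - 1))) :=
            Nat.mul_le_mul_right _ h2M
      _ = (2 * p ^ 2) ^ (p ^ 2 * (p - 1)) := by
            rw [pow_mul p 2 (p ^ 2 * (p - 1)), ← mul_pow]
    have : (2 * p ^ 2) ^ (p ^ 2 * (p - 1)) < (2 * p ^ 2) ^ (p ^ 2 * (p - 1)) :=
      lt_of_lt_of_le (lt_trans F1 (lt_of_lt_of_le i_low F3)) F4
    exact Nat.lt_irrefl _ this
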